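/- Let x₂ be the positive root of c^μ x − α c^μ + λ x^{1−μ} = 0 with 0 < μ < 1, λ, c, α > 0. Then the function ψ(u) = (1 − x₂/α) e^{−x₂ u} satisfies the integro-differential equation c^μ · C_D_∞^μ[ψ](u) + λψ(u) = λ[∫_0^u ψ(u−y) α e^{−αy} dy + e^{−αu}] for all u > 0. -/

import Mathlib

open MeasureTheory intervalIntegral

/-- Right Caputo fractional derivative of order `r` with upper limit `∞`. -/
noncomputable def caputoInf (r : ℝ) (f : ℝ → ℝ) : ℝ → ℝ :=
  fun x => ((-1 : ℝ) ^ (⌊r⌋₊ + 1) / Real.Gamma ((⌊r⌋₊ + 1 : ℕ) - r)) *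
    ∫ y in Set.Ioi x,
      (y - x) ^ (((⌊r⌋₊ + 1 : ℕ) : ℝ) - r - 1) * iteratedDeriv (⌊r⌋₊ + 1) f y

lemma shift_Ioi (u : ℝ) (g : ℝ → ℝ) :
    ∫ y in Set.Ioi u, g y = ∫ t in Set.Ioi (0:ℝ), g (t + u) := by
  rw [← (measurePreserving_add_right volume u).setIntegral_image_emb
    (measurableEmbedding_addRight u)]
  simp

lemma caputo_exp (mu C b : ℝ) (hmu0 : 0 < mu) (hmu1 : mu < 1) (hb : 0 < b) (u : ℝ) :
    caputoInf mu (fun v => C * Real.exp (-b * v)) u = C * b ^ mu * Real.exp (-b * u) := by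
  have hfl : ⌊mu⌋₊ = 0 := Nat.floor_eq_zero.2 hmu1
  have hderiv : ∀ y : ℝ, iteratedDeriv 1 (fun v => C * Real.exp (-b * v)) y
      = C * (-b) * Real.exp (-b * y) := by
    intro y
    rw [iteratedDeriv_one]
    have h1 : HasDerivAt (fun v : ℝ => -b * v) (-b) y := by
      simpa using (hasDerivAt_id y).const_mul (-b)
    have : HasDerivAt (fun v => C * Real.exp (-b * v)) (C * (-b) * Real.exp (-b * y)) y := by
      simpa [mul_comm, mul_assoc, mul_left_comm] using h1.exp.const_mul C
    exact this.deriv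
  unfold caputoInf
  rw [hfl]
  simp only [hderiv]
  have key : ∫ y in Set.Ioi u, (y - u) ^ (((0 + 1 : ℕ) : ℝ) - mu - 1) * (C * (-b) * Real.exp (-b * y))
      = C * (-b) * Real.exp (-b * u) * ((1 / b) ^ (1 - mu) * Real.Gamma (1 - mu)) := by
    rw [shift_Ioi u (fun y => (y - u) ^ (((0 + 1 : ℕ) : ℝ) - mu - 1) * (C * (-b) * Real.exp (-b * y)))]
    have hG := Real.integral_rpow_mul_exp_neg_mul_Ioi (a := 1 - mu) (r := b) (by linarith) hb
    rw [← hG, ← MeasureTheory.integral_const_mul]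
    apply setIntegral_congr_fun measurableSet_Ioi
    intro t ht
    simp only [add_sub_cancel_right]
    push_cast
    rw [show -b * (t + u) = -b * t + -b * u by ring, Real.exp_add,
      show -(b * t) = -b * t by ring]
    ring
  rw [key]
  have hGpos : 0 < Real.Gamma (1 - mu) := Real.Gamma_pos_of_pos (by linarith)
  have hbp : ((1 : ℝ) / b) ^ (1 - mu) = b ^ mu / b := by
    rw [one_div, Real.inv_rpow hb.le, ← Real.rpow_neg hb.le,
      show -(1 - mu) = mu - 1 by ring, Real.rpow_sub hb, Real.rpow_one]
  rw [hbp]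
  have hcast : (((0 + 1 : ℕ) : ℝ)) - mu = 1 - mu := by norm_num
  rw [hcast]
  have hbne : b ≠ 0 := ne_of_gt hb
  field_simp
  ring

lemma conv_int (x₂ α u : ℝ) (hne : x₂ ≠ α) (hα : α ≠ 0) :
    ∫ y in (0:ℝ)..u, (1 - x₂ / α) * Real.exp (-x₂ * (u - y)) * (α * Real.exp (-α * y))
      = Real.exp (-x₂ * u) - Real.exp (-α * u) := by
  have hk : x₂ - α ≠ 0 := sub_ne_zero.2 hne
  have h1 : ∀ y : ℝ, (1 - x₂ / α) * Real.exp (-x₂ * (u - y)) * (α * Real.exp (-α * y))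
      = ((α - x₂) * Real.exp (-x₂ * u)) * Real.exp ((x₂ - α) * y) := by
    intro y
    rw [show -x₂ * (u - y) = -x₂ * u + x₂ * y by ring, Real.exp_add,
      show (x₂ - α) * y = x₂ * y + (-α * y) by ring, Real.exp_add]
    field_simp
  rw [intervalIntegral.integral_congr (g := fun y => ((α - x₂) * Real.exp (-x₂ * u)) * Real.exp ((x₂ - α) * y)) (fun y _ => h1 y)]
  rw [intervalIntegral.integral_const_mul]
  rw [intervalIntegral.integral_comp_mul_left (fun x => Real.exp x) hk]
  rw [integral_exp]
  simp only [mul_zero, Real.exp_zero]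
  rw [show (x₂ - α) * u = x₂*u - α*u by ring, Real.exp_sub,
    show -x₂ * u = -(x₂*u) by ring, show -α * u = -(α*u) by ring,
    Real.exp_neg (x₂*u), Real.exp_neg (α*u)]
  have e1 := Real.exp_ne_zero (x₂*u)
  have e2 := Real.exp_ne_zero (α*u)
  field_simp
  have hk' : -α + x₂ ≠ 0 := by intro h; apply hk; linarith
  have ha : Real.exp (α*u) * (Real.exp (α*u))⁻¹ = 1 := mul_inv_cancel₀ e2
  have hb : (-α + x₂) * (-α + x₂)⁻¹ = 1 := mul_inv_cancel₀ hk'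
  linear_combination (α - x₂) * (Real.exp (x₂*u) - Real.exp (α*u)) * (-α + x₂)⁻¹ * ha - (Real.exp (x₂*u) - Real.exp (α*u)) * hb

/-- In the fractional Poisson risk model with Exp(α) claims, with `x₂` the positive
root of `c^μ x − α c^μ + λ x^{1−μ} = 0`, the function `ψ(u) = (1 − x₂/α) e^{−x₂ u}`
satisfies `c^μ C_D_∞^μ[ψ](u) + λψ(u) = λ[∫_0^u ψ(u−y) α e^{−αy} dy + e^{−αu}]`. -/
theorem stmt14 (mu lam c α x₂ : ℝ) (hmu0 : 0 < mu) (hmu1 : mu < 1)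
    (hlam : 0 < lam) (hc : 0 < c) (hα : 0 < α) (hx₂ : 0 < x₂)
    (hroot : c ^ mu * x₂ - α * c ^ mu + lam * x₂ ^ (1 - mu) = 0) :
    ∀ u > (0 : ℝ),
      c ^ mu * caputoInf mu (fun v => (1 - x₂ / α) * Real.exp (-x₂ * v)) u
          + lam * ((1 - x₂ / α) * Real.exp (-x₂ * u))
        = lam * ((∫ y in (0:ℝ)..u,
              (1 - x₂ / α) * Real.exp (-x₂ * (u - y)) * (α * Real.exp (-α * y)))
            + Real.exp (-α * u)) := by
  intro u hu
  have hx₂pow : 0 < x₂ ^ (1 - mu) := Real.rpow_pos_of_pos hx₂ _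
  have hcpow : 0 < c ^ mu := Real.rpow_pos_of_pos hc _
  have hlt : x₂ < α := by nlinarith
  have hne : x₂ ≠ α := ne_of_lt hlt
  rw [caputo_exp mu (1 - x₂ / α) x₂ hmu0 hmu1 hx₂ u, conv_int x₂ α u hne (ne_of_gt hα)]
  have h1 : c ^ mu * (α - x₂) = lam * x₂ ^ (1 - mu) := by linarith
  have h2 : x₂ ^ mu * x₂ ^ (1 - mu) = x₂ := by
    rw [← Real.rpow_add hx₂]; norm_num
  have key : c ^ mu * ((1 - x₂ / α) * x₂ ^ mu) + lam * (1 - x₂ / α) = lam := by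
    have hαne : α ≠ 0 := ne_of_gt hα
    field_simp
    linear_combination x₂ ^ mu * h1 + lam * h2
  have E := Real.exp_pos (-x₂ * u)
  linear_combination Real.exp (-x₂ * u) * key
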